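/- Define q_1 = • and q_{n+1} = q_n·• − B⁺(q_n) in the span of planar forests (elements of P_↘(n)). Then for every forest F = t_1…t_n with trees t_i, the element q_{n+1} acted via the P_↘-structure on (•, t_1, …, t_n) is a primitive element x of the infinitesimal Hopf algebra H satisfying γ(x) = t_1…t_n. Hence x = γ^{-1}_{|Prim(H)}(F), giving an inverse to the restriction of γ to primitive elements. -/

import Mathlib

open scoped TensorProduct

/-- Planar rooted trees; `PTree.node []` is the single-vertex tree `•`. -/
inductive PTree : Type
  | node : List PTree → PTree

/-- Planar rooted forests. -/
abbrev Forest : Type := List PTree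

instance : Monoid Forest where
  mul := fun x y => List.append x y
  one := ([] : List PTree)
  mul_assoc := List.append_assoc
  one_mul := fun _ => rfl
  mul_one := List.append_nil

/-- The infinitesimal Hopf algebra `H` of planar rooted forests. -/
abbrev H : Type := MonoidAlgebra ℚ Forest

/-- The basis element of `H` indexed by a forest. -/
noncomputable def bf (F : Forest) : H := MonoidAlgebra.of ℚ Forest F

/-- The operator `B⁺` grafting a forest on a common new root, extended linearly. -/
noncomputable def Bplus : H →ₗ[ℚ] H :=
  (Finsupp.lift H ℚ Forest fun F => bf [PTree.node F]) ∘ₗ (MonoidAlgebra.coeffLinearEquiv ℚ).toLinearMap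

/-- The map `γ`: `t_1…t_n ↦ δ_{t_1,•} t_2…t_n`, extended linearly. -/
noncomputable def gammaH : H →ₗ[ℚ] H :=
  (Finsupp.lift H ℚ Forest fun F =>
    match F with
    | PTree.node [] :: rest => bf rest
    | _ => 0) ∘ₗ (MonoidAlgebra.coeffLinearEquiv ℚ).toLinearMap

/-- Grafting on the root. -/
def graftRoot (F : Forest) : Forest → Forest
  | [] => F
  | .node c :: rest => .node (F ++ c) :: rest

/-- The product `↘` extended bilinearly to `H`. -/
noncomputable def grH : H →ₗ[ℚ] H →ₗ[ℚ] H :=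
  (Finsupp.lift (H →ₗ[ℚ] H) ℚ Forest fun F =>
    (Finsupp.lift H ℚ Forest fun G => bf (graftRoot F G)) ∘ₗ (MonoidAlgebra.coeffLinearEquiv ℚ).toLinearMap) ∘ₗ (MonoidAlgebra.coeffLinearEquiv ℚ).toLinearMap

/-- The action of the elements `q_1 = •`, `q_{n+1} = q_n·• − B⁺(q_n)` of `P_↘(n+1)` on
`(x, t_1, …, t_n)`: `q_{n+1}·(x,t_1,…,t_n) = q_2·(q_n·(x,t_1,…,t_{n−1}), t_n)` with
`q_2·(x,t) = x·t − x ↘ t`. -/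
noncomputable def qAct : H → List PTree → H
  | x, [] => x
  | x, t :: rest => qAct (x * bf [t] - grH x (bf [t])) rest

/- ### Auxiliary lemmas -/

lemma bf_eq_single (F : Forest) : bf F = MonoidAlgebra.single F (1 : ℚ) := by
  simp [bf, MonoidAlgebra.of_apply]

lemma lift_single {M : Type} [AddCommMonoid M] [Module ℚ M] (f : Forest → M)
    (F : Forest) (r : ℚ) :
    (Finsupp.lift M ℚ Forest f ∘ₗ (MonoidAlgebra.coeffLinearEquiv ℚ).toLinearMap)
      (MonoidAlgebra.single F r) = r • f F := by
  show Finsupp.lift M ℚ Forest f (Finsupp.single F r) = _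
  erw [Finsupp.lift_apply]
  rw [Finsupp.sum_single_index (zero_smul ℚ (f F))]

lemma bf_mul (A B : Forest) : bf A * bf B = bf (A ++ B) := by
  show MonoidAlgebra.of ℚ Forest A * MonoidAlgebra.of ℚ Forest B = _
  rw [← map_mul]
  rfl

lemma bf_nil : bf [] = (1 : H) := map_one (MonoidAlgebra.of ℚ Forest)

lemma single_eq_smul_bf (F : Forest) (r : ℚ) :
    (MonoidAlgebra.single F r : H) = r • bf F := by
  rw [bf_eq_single, MonoidAlgebra.smul_single, smul_eq_mul, mul_one]

lemma Bplus_bf (F : Forest) : Bplus (bf F) = bf [PTree.node F] := by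
  rw [bf_eq_single]
  exact (lift_single (M := H) (fun F => bf [PTree.node F]) F 1).trans (one_smul ℚ _)

lemma gammaH_bf (F : Forest) :
    gammaH (bf F) = (match F with
      | PTree.node [] :: rest => bf rest
      | _ => 0) := by
  rw [bf_eq_single]
  exact (lift_single (M := H) _ F 1).trans (one_smul ℚ _)

lemma gammaH_bf_nil : gammaH (bf []) = 0 := by rw [gammaH_bf]

lemma gammaH_bf_bullet (rest : List PTree) :
    gammaH (bf (PTree.node [] :: rest)) = bf rest := by rw [gammaH_bf]

lemma gammaH_bf_cons (h : PTree) (tl rest : List PTree) :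
    gammaH (bf (PTree.node (h :: tl) :: rest)) = 0 := by rw [gammaH_bf]

lemma grH_bf_bf (F G : Forest) : grH (bf F) (bf G) = bf (graftRoot F G) := by
  have h1 : grH (bf F) = (Finsupp.lift H ℚ Forest fun G => bf (graftRoot F G)) ∘ₗ
      (MonoidAlgebra.coeffLinearEquiv ℚ).toLinearMap := by
    rw [bf_eq_single F]
    exact (lift_single (M := H →ₗ[ℚ] H) _ F 1).trans (one_smul ℚ _)
  rw [h1, bf_eq_single G]
  exact (lift_single (M := H) _ G 1).trans (one_smul ℚ _)

lemma grH_node (c : Forest) (x : H) :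
    grH x (bf [PTree.node c]) = Bplus (x * bf c) := by
  induction x using MonoidAlgebra.induction_linear with
  | zero => simp
  | add f g hf hg => simp [map_add, add_mul, LinearMap.add_apply, hf, hg]
  | single G r =>
    rw [single_eq_smul_bf, map_smul, LinearMap.smul_apply, smul_mul_assoc, map_smul,
      grH_bf_bf, bf_mul, Bplus_bf]
    rfl

lemma lT_mul (x : H) (y : H ⊗[ℚ] H) :
    LinearMap.lTensor H Bplus ((x ⊗ₜ (1 : H)) * y)
      = (x ⊗ₜ (1 : H)) * LinearMap.lTensor H Bplus y := by
  induction y using TensorProduct.induction_on with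
  | zero => simp
  | tmul a b => simp [Algebra.TensorProduct.tmul_mul_tmul]
  | add a b ha hb => simp [mul_add, ha, hb]

lemma prim_step (Δ : H →ₗ[ℚ] H ⊗[ℚ] H)
    (hΔm : ∀ x y : H, Δ (x * y) = (x ⊗ₜ (1 : H)) * Δ y + Δ x * ((1 : H) ⊗ₜ y) - x ⊗ₜ y)
    (hΔB : ∀ x : H, Δ (Bplus x) = (Bplus x) ⊗ₜ 1 + (LinearMap.lTensor H Bplus) (Δ x))
    (x : H) (c : Forest) (hx : Δ x = x ⊗ₜ 1 + 1 ⊗ₜ x) :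
    Δ (x * bf [PTree.node c] - grH x (bf [PTree.node c])) =
      (x * bf [PTree.node c] - grH x (bf [PTree.node c])) ⊗ₜ 1
        + 1 ⊗ₜ (x * bf [PTree.node c] - grH x (bf [PTree.node c])) := by
  rw [grH_node, ← Bplus_bf c]
  rw [map_sub, hΔm x (Bplus (bf c)), hΔB (bf c), hΔB (x * bf c), hΔm x (bf c), hx]
  simp only [add_mul, mul_add, Algebra.TensorProduct.tmul_mul_tmul, one_mul, mul_one,
    map_add, map_sub, lT_mul, LinearMap.lTensor_tmul]
  rw [TensorProduct.sub_tmul, TensorProduct.tmul_sub]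
  abel

lemma gamma_step_bf (G c : Forest) :
    gammaH (bf G * bf [PTree.node c] - grH (bf G) (bf [PTree.node c])) =
      gammaH (bf G) * bf [PTree.node c] := by
  rw [bf_mul, grH_bf_bf, map_sub]
  match G with
  | [] =>
    show gammaH (bf ([] ++ [PTree.node c])) - gammaH (bf (graftRoot [] [PTree.node c]))
        = gammaH (bf []) * bf [PTree.node c]
    rw [gammaH_bf_nil, zero_mul]
    show gammaH (bf [PTree.node c]) - gammaH (bf [PTree.node ([] ++ c)]) = 0
    simp
  | PTree.node [] :: rest =>
    show gammaH (bf (PTree.node [] :: (rest ++ [PTree.node c])))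
        - gammaH (bf (PTree.node (PTree.node [] :: (rest ++ c)) :: []))
      = gammaH (bf (PTree.node [] :: rest)) * bf [PTree.node c]
    rw [gammaH_bf_bullet, gammaH_bf_bullet, gammaH_bf_cons, bf_mul, sub_zero]
  | PTree.node (h :: tl) :: rest =>
    show gammaH (bf (PTree.node (h :: tl) :: (rest ++ [PTree.node c])))
        - gammaH (bf (PTree.node (PTree.node (h :: tl) :: (rest ++ c)) :: []))
      = gammaH (bf (PTree.node (h :: tl) :: rest)) * bf [PTree.node c]
    rw [gammaH_bf_cons, gammaH_bf_cons, gammaH_bf_cons, zero_mul, sub_zero]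

lemma gamma_step (x : H) (c : Forest) :
    gammaH (x * bf [PTree.node c] - grH x (bf [PTree.node c])) =
      gammaH x * bf [PTree.node c] := by
  induction x using MonoidAlgebra.induction_linear with
  | zero => simp
  | add f g hf hg =>
    rw [add_mul, map_add, LinearMap.add_apply, add_sub_add_comm, map_add, hf, hg,
      map_add, add_mul]
  | single G r =>
    rw [single_eq_smul_bf, smul_mul_assoc, map_smul, LinearMap.smul_apply, ← smul_sub,
      map_smul, gamma_step_bf, map_smul, smul_mul_assoc]

lemma qAct_main (Δ : H →ₗ[ℚ] H ⊗[ℚ] H)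
    (hΔm : ∀ x y : H, Δ (x * y) = (x ⊗ₜ (1 : H)) * Δ y + Δ x * ((1 : H) ⊗ₜ y) - x ⊗ₜ y)
    (hΔB : ∀ x : H, Δ (Bplus x) = (Bplus x) ⊗ₜ 1 + (LinearMap.lTensor H Bplus) (Δ x)) :
    ∀ (L : List PTree) (x : H), Δ x = x ⊗ₜ 1 + 1 ⊗ₜ x →
      Δ (qAct x L) = qAct x L ⊗ₜ 1 + 1 ⊗ₜ qAct x L ∧
      gammaH (qAct x L) = gammaH x * bf L := by
  intro L
  induction L with
  | nil =>
    intro x hx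
    exact ⟨hx, by rw [qAct, bf_nil, mul_one]⟩
  | cons t rest ih =>
    intro x hx
    obtain ⟨c⟩ := t
    rw [qAct]
    obtain ⟨h1, h2⟩ := ih _ (prim_step Δ hΔm hΔB x c hx)
    refine ⟨h1, ?_⟩
    rw [h2, gamma_step, mul_assoc, bf_mul]
    rfl

/-- For the left-admissible-cut coproduct `Δ` of `H`, and every forest `F = t_1…t_n`,
the element `q_{n+1}·(•, t_1, …, t_n)` is primitive and is mapped by `γ` to `t_1…t_n`;
hence it equals `γ⁻¹_{|Prim(H)}(F)`, inverting the restriction of `γ` to primitive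
elements. -/
theorem qAct_primitive_gamma (Δ : H →ₗ[ℚ] H ⊗[ℚ] H)
    (hΔ1 : Δ 1 = 1 ⊗ₜ 1)
    (hΔm : ∀ x y : H, Δ (x * y) = (x ⊗ₜ (1 : H)) * Δ y + Δ x * ((1 : H) ⊗ₜ y) - x ⊗ₜ y)
    (hΔB : ∀ x : H, Δ (Bplus x) = (Bplus x) ⊗ₜ 1 + (LinearMap.lTensor H Bplus) (Δ x))
    (L : List PTree) :
    Δ (qAct (bf [PTree.node []]) L) =
        qAct (bf [PTree.node []]) L ⊗ₜ 1 + 1 ⊗ₜ qAct (bf [PTree.node []]) L ∧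
      gammaH (qAct (bf [PTree.node []]) L) = bf L := by
  have hx0 : bf [PTree.node []] = Bplus 1 := by rw [← bf_nil, Bplus_bf]
  have hprim : Δ (bf [PTree.node []]) =
      bf [PTree.node []] ⊗ₜ 1 + 1 ⊗ₜ bf [PTree.node []] := by
    rw [hx0, hΔB, hΔ1]
    simp
  obtain ⟨h1, h2⟩ := qAct_main Δ hΔm hΔB L (bf [PTree.node []]) hprim
  refine ⟨h1, ?_⟩
  rw [h2, gammaH_bf_bullet, bf_nil, one_mul]
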